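/- arXiv:1505.02312 — 7 statements merged into one kernel-verified Lean document; each statement's English description precedes it below -/
import Mathlib

section
/- Let R be a ring, p ∈ R with inner inverse q (pqp = p). If 1 ∈ pR + Rp, then pqqp = pq + qp − 1 in R. -/
/-- If `p*q*p = p` and `1 ∈ pR + Rp`, then `p*q*q*p = p*q + q*p - 1`. -/
theorem stmt_3 {R : Type*} [Ring R] (p q : R) (h : p * q * p = p)
    (h1 : ∃ s t : R, (1 : R) = p * s + t * p) :
    p * q * q * p = p * q + q * p - 1 := by
  obtain ⟨s, t, hst⟩ := h1
  have h2 : (1 - p * q) * p = 0 := by rw [sub_mul, one_mul, h, sub_self]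
  have h3 : p * (1 - q * p) = 0 := by
    rw [mul_sub, mul_one, ← mul_assoc, h, sub_self]
  have key : (1 - p * q) * (p * s + t * p) * (1 - q * p) = 0 := by
    have expand : (1 - p * q) * (p * s + t * p) * (1 - q * p)
        = ((1 - p * q) * p) * (s * (1 - q * p))
          + ((1 - p * q) * t) * (p * (1 - q * p)) := by noncomm_ring
    rw [expand, h2, h3, zero_mul, mul_zero, add_zero]
  rw [← hst, mul_one] at key
  have key2 : 1 - p * q - q * p + p * q * q * p = 0 := by
    rw [← key]; noncomm_ring
  calc p * q * q * p
      = (1 - p * q - q * p + p * q * q * p) + (p * q + q * p - 1) := by noncomm_ring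
    _ = p * q + q * p - 1 := by rw [key2, zero_add]
end

section
/- Let R be a ring, p ∈ R, and q an inner inverse of p (pqp = p). Then for any x ∈ R, x ∈ pR + Rp if and only if (1 − pq)·x·(1 − qp) = 0. -/
/-- If `p*q*p = p`, then `x ∈ pR + Rp` iff `(1 - p*q) * x * (1 - q*p) = 0`. -/
theorem stmt_5 {R : Type*} [Ring R] (p q : R) (h : p * q * p = p) (x : R) :
    (∃ y z : R, x = p * y + z * p) ↔ (1 - p * q) * x * (1 - q * p) = 0 := by
  constructor
  · rintro ⟨y, z, rfl⟩
    have h1 : (1 - p * q) * p = 0 := by rw [sub_mul, one_mul, h, sub_self]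
    have h2 : p * (1 - q * p) = 0 := by
      rw [mul_sub, mul_one, ← mul_assoc, h, sub_self]
    calc (1 - p * q) * (p * y + z * p) * (1 - q * p)
        = ((1 - p * q) * p) * (y * (1 - q * p)) + (z - p * q * z) * (p * (1 - q * p)) := by
          noncomm_ring
      _ = 0 := by rw [h1, h2]; noncomm_ring
  · intro hx
    refine ⟨q * x, x * q - p * q * x * q, ?_⟩
    have key : x - (p * (q * x) + (x * q - p * q * x * q) * p) =
        (1 - p * q) * x * (1 - q * p) := by noncomm_ring
    rw [hx] at key
    exact (sub_eq_zero.mp key)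
end

section
/- Let K be a von Neumann regular commutative ring, M a K-module, and x a nonzero element of M. Then there exists a maximal ideal P of K such that x ∉ PM. -/
/-- In a commutative ring, membership in `P • ⊤` yields an idempotent `e ∈ P`
fixing the element, provided the ring is von Neumann regular. -/
theorem aux_idem {K : Type*} [CommRing K] (hreg : ∀ a : K, ∃ b : K, a = a ^ 2 * b)
    {M : Type*} [AddCommGroup M] [Module K M] (P : Ideal K) (x : M)
    (hx : x ∈ (P • (⊤ : Submodule K M) : Submodule K M)) :
    ∃ e ∈ P, e * e = e ∧ e • x = x := by
  refine Submodule.smul_induction_on hx ?_ ?_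
  · intro r hr n _
    obtain ⟨b, hb⟩ := hreg r
    refine ⟨r * b, Ideal.mul_mem_right _ _ hr, ?_, ?_⟩
    · have : r * b * (r * b) = (r ^ 2 * b) * b := by ring
      rw [this, ← hb]
    · have : (r * b) • r • n = (r ^ 2 * b) • n := by
        rw [smul_smul]; ring_nf
      rw [this, ← hb]
  · rintro y z ⟨e, heP, hee, hey⟩ ⟨f, hfP, hff, hfz⟩
    refine ⟨e + f - e * f, ?_, ?_, ?_⟩
    · exact P.sub_mem (P.add_mem heP hfP) (Ideal.mul_mem_right _ _ heP)
    · linear_combination (1 - f) ^ 2 * hee + (1 - e) * hff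
    · have ha : (e * f) • y = f • y := by rw [mul_comm, mul_smul, hey]
      have hb : (e * f) • z = e • z := by rw [mul_smul, hfz]
      have h1 : (e + f - e * f) • y = y := by
        rw [sub_smul, add_smul, ha, hey]; abel
      have h2 : (e + f - e * f) • z = z := by
        rw [sub_smul, add_smul, hb, hfz]; abel
      rw [smul_add, h1, h2]

/-- If `K` is a von Neumann regular commutative ring, `M` a `K`-module and `x ∈ M`
nonzero, then `x ∉ PM` for some maximal ideal `P` of `K`. -/
theorem stmt_9 {K : Type*} [CommRing K] (hreg : ∀ a : K, ∃ b : K, a = a ^ 2 * b)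
    {M : Type*} [AddCommGroup M] [Module K M] (x : M) (hx : x ≠ 0) :
    ∃ P : Ideal K, P.IsMaximal ∧ x ∉ (P • (⊤ : Submodule K M) : Submodule K M) := by
  set I : Ideal K := LinearMap.ker (LinearMap.toSpanSingleton K M x) with hI
  have hIne : I ≠ ⊤ := by
    intro h
    have : (1 : K) ∈ I := h ▸ Submodule.mem_top
    simp [hI, LinearMap.mem_ker, LinearMap.toSpanSingleton_apply] at this
    exact hx this
  obtain ⟨P, hPmax, hIP⟩ := Ideal.exists_le_maximal I hIne
  refine ⟨P, hPmax, fun hmem => ?_⟩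
  obtain ⟨e, heP, hee, hex⟩ := aux_idem hreg P x hmem
  have h1e : (1 - e) ∈ I := by
    simp only [hI, LinearMap.mem_ker, LinearMap.toSpanSingleton_apply, sub_smul, one_smul, hex,
      sub_self]
  have : (1 : K) ∈ P := by
    have := P.add_mem (hIP h1e) heP
    simpa using this
  exact hPmax.ne_top (Ideal.eq_top_of_isUnit_mem P this isUnit_one)
end

section
/- Let K be a commutative ring such that for every ideal I of K and every element p̄ ∈ K/I, the K-algebra K/I can be embedded in a K-algebra in which p̄ has an inner inverse. Then K is von Neumann regular. -/
universe u

/-- Data witnessing that the `K`-algebra `K ⧸ I` embeds in a `K`-algebra in which the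
image of `p` has an inner inverse. -/
structure InnerInverseEmbedding (K : Type u) [CommRing K] (I : Ideal K) (p : K ⧸ I) where
  A : Type u
  [ringA : Ring A]
  [algA : Algebra K A]
  emb : (K ⧸ I) →ₐ[K] A
  inj : Function.Injective emb
  q : A
  inner : emb p * q * emb p = emb p

/-- If for every ideal `I` of the commutative ring `K` and every `p ∈ K ⧸ I` the
`K`-algebra `K ⧸ I` embeds in a `K`-algebra in which `p` acquires an inner inverse,
then `K` is von Neumann regular. -/
theorem stmt_10 (K : Type u) [CommRing K]
    (h : ∀ (I : Ideal K) (p : K ⧸ I), Nonempty (InnerInverseEmbedding K I p)) :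
    ∀ p : K, ∃ q : K, p = p ^ 2 * q := by
  intro p
  set I : Ideal K := Ideal.span {p ^ 2} with hI
  obtain ⟨E⟩ := h I (Ideal.Quotient.mk I p)
  letI : Ring E.A := E.ringA
  letI : Algebra K E.A := E.algA
  -- the image of p in A is the algebra map of p, hence central
  have halg : E.emb (Ideal.Quotient.mk I p) = algebraMap K E.A p := by
    exact E.emb.commutes p
  -- the square of the image of p is zero
  have hsq : E.emb (Ideal.Quotient.mk I p) * E.emb (Ideal.Quotient.mk I p) = 0 := by
    rw [← map_mul, ← map_mul]
    have hz : (Ideal.Quotient.mk I) (p * p) = 0 := by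
      rw [Ideal.Quotient.eq_zero_iff_mem, hI, ← pow_two]
      exact Ideal.mem_span_singleton_self _
    rw [hz, map_zero]
  -- hence the image of p is zero
  have hzero : E.emb (Ideal.Quotient.mk I p) = 0 := by
    have hcomm : E.q * E.emb (Ideal.Quotient.mk I p)
        = E.emb (Ideal.Quotient.mk I p) * E.q := by
      rw [halg]; exact (Algebra.commutes p E.q).symm
    calc E.emb (Ideal.Quotient.mk I p)
        = E.emb (Ideal.Quotient.mk I p) * E.q * E.emb (Ideal.Quotient.mk I p) :=
          E.inner.symm
      _ = E.emb (Ideal.Quotient.mk I p) * (E.q * E.emb (Ideal.Quotient.mk I p)) := by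
          rw [mul_assoc]
      _ = E.emb (Ideal.Quotient.mk I p) * (E.emb (Ideal.Quotient.mk I p) * E.q) := by
          rw [hcomm]
      _ = E.emb (Ideal.Quotient.mk I p) * E.emb (Ideal.Quotient.mk I p) * E.q := by
          rw [mul_assoc]
      _ = 0 := by rw [hsq, zero_mul]
  have hmem : p ∈ I := by
    rw [← Ideal.Quotient.eq_zero_iff_mem]
    exact E.inj (by rw [hzero, map_zero])
  rw [hI, Ideal.mem_span_singleton] at hmem
  obtain ⟨q, hq⟩ := hmem
  exact ⟨q, hq⟩
end

section
/- Let K be a commutative ring with the property that for every K-module M and every nonzero x ∈ M there is a maximal ideal P of K with x ∉ PM. Then every K-algebra R embeds in a von Neumann regular K-algebra. -/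
universe u v

/-- Data witnessing that the `K`-algebra `R` embeds in a von Neumann regular
`K`-algebra. -/
structure VNREmbedding (K : Type v) [CommRing K] (R : Type u) [Ring R] [Algebra K R] where
  S : Type u
  [ringS : Ring S]
  [algS : Algebra K S]
  regular : ∀ s : S, ∃ t : S, s * t * s = s
  emb : R →ₐ[K] S
  inj : Function.Injective emb

theorem end_vnr {F : Type*} [DivisionRing F] {V : Type*} [AddCommGroup V] [Module F V]
    (f : V →ₗ[F] V) : ∃ g : V →ₗ[F] V, ∀ x, f (g (f x)) = f x := by
  obtain ⟨q, hq⟩ := Submodule.exists_isCompl (LinearMap.range f)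
  obtain ⟨s, hs⟩ := f.rangeRestrict.exists_rightInverse_of_surjective
    (LinearMap.range_rangeRestrict f)
  refine ⟨s ∘ₗ Submodule.projectionOnto _ q hq, fun x => ?_⟩
  simp only [LinearMap.comp_apply]
  rw [Submodule.projectionOnto_apply_left hq ⟨f x, LinearMap.mem_range_self f x⟩]
  have := congrArg (fun (g : LinearMap.range f →ₗ[F] LinearMap.range f) =>
    ((g ⟨f x, LinearMap.mem_range_self f x⟩ : LinearMap.range f) : V)) hs
  simp only [LinearMap.comp_apply, LinearMap.id_apply] at this
  exact this

section Main

variable {K : Type v} [CommRing K] {R : Type u} [Ring R] [Algebra K R]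

theorem mulLeft_le (P : Ideal K) (r : R) :
    (P • (⊤ : Submodule K R)) ≤
      (P • (⊤ : Submodule K R)).comap (LinearMap.mulLeft K r) := by
  intro x hx
  refine Submodule.smul_induction_on hx (fun p hp m _ => ?_) (fun a b ha hb => ?_)
  · simp only [Submodule.mem_comap, LinearMap.mulLeft_apply, mul_smul_comm]
    exact Submodule.smul_mem_smul hp trivial
  · simp only [Submodule.mem_comap, LinearMap.mulLeft_apply, mul_add] at *
    exact Submodule.add_mem _ ha hb

/-- The left-regular representation on `R ⧸ P•⊤` as a `K`-algebra hom. -/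
noncomputable def leftRep (P : Ideal K) :
    R →ₐ[K] Module.End K (R ⧸ (P • (⊤ : Submodule K R))) where
  toFun r := Submodule.mapQ _ _ (LinearMap.mulLeft K r) (mulLeft_le P r)
  map_one' := by
    refine LinearMap.ext fun x => Submodule.Quotient.induction_on _ x fun y => ?_
    simp
  map_mul' r s := by
    refine LinearMap.ext fun x => Submodule.Quotient.induction_on _ x fun y => ?_
    simp [Module.End.mul_apply, mul_assoc]
  map_zero' := by
    refine LinearMap.ext fun x => Submodule.Quotient.induction_on _ x fun y => ?_
    simp
  map_add' r s := by
    refine LinearMap.ext fun x => Submodule.Quotient.induction_on _ x fun y => ?_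
    simp [add_mul, Submodule.Quotient.mk_add]
  commutes' k := by
    refine LinearMap.ext fun x => Submodule.Quotient.induction_on _ x fun y => ?_
    rw [Module.algebraMap_end_apply, Submodule.mapQ_apply, LinearMap.mulLeft_apply,
      ← Algebra.smul_def, Submodule.Quotient.mk_smul]

end Main

/-- If `K` is a commutative ring such that every nonzero element `x` of any `K`-module
avoids `PM` for some maximal ideal `P`, then every `K`-algebra embeds in a von Neumann
regular `K`-algebra. -/
theorem stmt_11 {K : Type v} [CommRing K]
    (h : ∀ (M : Type u) [AddCommGroup M] [Module K M] (x : M), x ≠ 0 →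
      ∃ P : Ideal K, P.IsMaximal ∧ x ∉ (P • (⊤ : Submodule K M) : Submodule K M))
    (R : Type u) [Ring R] [Algebra K R] :
    Nonempty (VNREmbedding K R) := by
  classical
  choose P hPmax hPnot using fun i : {r : R // r ≠ 0} => h R i.1 i.2
  refine ⟨⟨∀ i : {r : R // r ≠ 0}, Module.End K (R ⧸ (P i • (⊤ : Submodule K R))), ?_,
    Pi.algHom _ _ (fun i => leftRep (P i)), ?_⟩⟩
  · -- regularity
    intro s
    have key : ∀ i, ∃ t : Module.End K (R ⧸ (P i • (⊤ : Submodule K R))), s i * t * s i = s i := by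
      intro i
      haveI := hPmax i
      letI := Ideal.Quotient.field (P i)
      let f' : R ⧸ (P i • (⊤ : Submodule K R)) →ₗ[K ⧸ P i] R ⧸ (P i • (⊤ : Submodule K R)) :=
        { toFun := s i
          map_add' := (s i).map_add
          map_smul' := fun c x => by
            obtain ⟨k, rfl⟩ := Ideal.Quotient.mk_surjective c
            exact (s i).map_smul k x }
      obtain ⟨g, hg⟩ := end_vnr f'
      let g' : Module.End K (R ⧸ (P i • (⊤ : Submodule K R))) :=
        { toFun := g
          map_add' := g.map_add
          map_smul' := fun k x => g.map_smul (Ideal.Quotient.mk (P i) k) x }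
      exact ⟨g', LinearMap.ext fun x => hg x⟩
    choose t ht using key
    exact ⟨t, funext ht⟩
  · -- injectivity
    rw [injective_iff_map_eq_zero]
    intro r hr
    by_contra hne
    have h1 := congrFun hr ⟨r, hne⟩
    have h2 := DFunLike.congr_fun h1
      (Submodule.Quotient.mk (p := P (⟨r, hne⟩ : {r : R // r ≠ 0}) • (⊤ : Submodule K R)) 1)
    simp only [Pi.algHom_apply, Pi.zero_apply, LinearMap.zero_apply, leftRep, AlgHom.coe_mk,
      RingHom.coe_mk, MonoidHom.coe_mk, OneHom.coe_mk] at h2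
    rw [Submodule.mapQ_apply, LinearMap.mulLeft_apply, mul_one] at h2
    exact hPnot ⟨r, hne⟩ ((Submodule.Quotient.mk_eq_zero _).mp h2)
end

section
/- Let n ≥ 1, let A and A' be abelian groups, μ : Aⁿ → A' an n-multilinear (i.e., additive in each argument) map, and x, y ∈ A. Consider all tuples (a₁,…,aₙ) with each aᵢ ∈ {x, y, x+y} satisfying: (i) if aᵢ = x with i < n then a_{i+1} = y; (ii) if aⱼ = y with j > 1 then a_{j−1} = x. To each such tuple assign the sign (−1)^d where d is the number of occurrences of the consecutive pattern (x, y) plus the number of occurrences of y in position 1 plus the number of occurrences of x in position n. Then the signed sum Σ (−1)^d μ(a₁,…,aₙ) over all such tuples equals 0. -/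
open scoped Classical

/-- The three allowed entries: `0 ↦ x`, `1 ↦ y`, `2 ↦ x + y` (treated as formally
distinct even if they coincide in `A`). -/
def entryVal {A : Type*} [AddCommGroup A] (x y : A) : Fin 3 → A := ![x, y, x + y]

/-- A tuple (encoded by `c : Fin n → Fin 3`) is admissible if every nonfinal `x` is
immediately followed by `y`, and every noninitial `y` is immediately preceded by `x`. -/
def IsAdmissible (n : ℕ) (c : Fin n → Fin 3) : Prop :=
  ∀ (i : Fin n) (h : i.val + 1 < n), c i = 0 ↔ c ⟨i.val + 1, h⟩ = 1

/-- `d`: the number of occurrences of the consecutive pattern `(x, y)`, plus `1` if the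
first entry is `y`, plus `1` if the last entry is `x`. -/
noncomputable def signExp (n : ℕ) (hn : 1 ≤ n) (c : Fin n → Fin 3) : ℕ :=
  (Finset.univ.filter
      (fun i : Fin n => ∃ h : i.val + 1 < n, c i = 0 ∧ c ⟨i.val + 1, h⟩ = 1)).card
    + (if c ⟨0, hn⟩ = 1 then 1 else 0)
    + (if c ⟨n - 1, by omega⟩ = 0 then 1 else 0)

namespace Stmt13Aux

def S : Fin 3 → Finset (Fin 2) := ![{0}, {1}, {0, 1}]

lemma mem_S_zero {a : Fin 3} : (0 : Fin 2) ∈ S a ↔ a = 0 ∨ a = 2 := by revert a; decide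
lemma mem_S_one {a : Fin 3} : (1 : Fin 2) ∈ S a ↔ a = 1 ∨ a = 2 := by revert a; decide

def t0 : Fin 3 → Fin 3 := ![2, 1, 0]
def t1 : Fin 3 → Fin 3 := ![0, 2, 1]

lemma t1_t1 (a : Fin 3) : t1 (t1 a) = a := by revert a; decide
lemma t1_ne {a : Fin 3} (h : a = 1 ∨ a = 2) : t1 a ≠ a := by revert a; decide
lemma t1_mem {a : Fin 3} (h : a = 1 ∨ a = 2) : t1 a = 1 ∨ t1 a = 2 := by revert a; decide
lemma t1_ne_zero {a : Fin 3} (h : a = 1 ∨ a = 2) : t1 a ≠ 0 := by revert a; decide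
lemma t1_one : t1 1 = 2 := by decide
lemma t1_two : t1 2 = 1 := by decide
lemma t0_t0 (a : Fin 3) : t0 (t0 a) = a := by revert a; decide
lemma t0_ne {a : Fin 3} (h : a = 0 ∨ a = 2) : t0 a ≠ a := by revert a; decide
lemma t0_mem {a : Fin 3} (h : a = 0 ∨ a = 2) : t0 a = 0 ∨ t0 a = 2 := by revert a; decide
lemma t0_ne_one {a : Fin 3} (h : a = 0 ∨ a = 2) : t0 a ≠ 1 := by revert a; decide
lemma t0_zero : t0 0 = 2 := by decide
lemma t0_two : t0 2 = 0 := by decide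

lemma neg_one_pow_add {a b : ℕ} (h : (a + b) % 2 = 1) : (-1 : ℤ) ^ a + (-1 : ℤ) ^ b = 0 := by
  rcases Nat.even_or_odd a with ha | ha
  · have hb : Odd b := by rw [Nat.odd_iff]; rcases ha with ⟨k, hk⟩; omega
    rw [ha.neg_one_pow, hb.neg_one_pow]; ring
  · have hb : Even b := by rw [Nat.even_iff]; rcases ha with ⟨k, hk⟩; omega
    rw [ha.neg_one_pow, hb.neg_one_pow]; ring

lemma card_helper {α : Type*} [DecidableEq α] {s t : Finset α} {j : α}
    (h1 : ∀ i, i ≠ j → (i ∈ s ↔ i ∈ t)) (h2 : j ∈ s ↔ j ∉ t) :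
    (s.card + t.card) % 2 = 1 := by
  by_cases hj : j ∈ s
  · have hjt : j ∉ t := h2.mp hj
    have hst : s.erase j = t := by
      ext i
      rcases eq_or_ne i j with rfl | hij
      · simp [hjt]
      · simp only [Finset.mem_erase, hij, ne_eq, not_false_iff, true_and]
        exact h1 i hij
    have h3 : (s.erase j).card = s.card - 1 := Finset.card_erase_of_mem hj
    have h4 : 1 ≤ s.card := Finset.card_pos.mpr ⟨j, hj⟩
    rw [hst] at h3; omega
  · have hjt : j ∈ t := by by_contra h; exact hj (h2.mpr h)
    have hst : t.erase j = s := by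
      ext i
      rcases eq_or_ne i j with rfl | hij
      · simp [hj]
      · simp only [Finset.mem_erase, hij, ne_eq, not_false_iff, true_and]
        exact (h1 i hij).symm
    have h3 : (t.erase j).card = t.card - 1 := Finset.card_erase_of_mem hjt
    have h4 : 1 ≤ t.card := Finset.card_pos.mpr ⟨j, hjt⟩
    rw [hst] at h3; omega

/-- abbreviation for the pattern-set in `signExp` -/
noncomputable def patSet (n : ℕ) (c : Fin n → Fin 3) : Finset (Fin n) :=
  Finset.univ.filter
    (fun i : Fin n => ∃ h : i.val + 1 < n, c i = 0 ∧ c ⟨i.val + 1, h⟩ = 1)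

lemma mem_patSet {n : ℕ} {c : Fin n → Fin 3} {i : Fin n} :
    i ∈ patSet n c ↔ ∃ h : i.val + 1 < n, c i = 0 ∧ c ⟨i.val + 1, h⟩ = 1 := by
  simp [patSet]

lemma signExp_eq (n : ℕ) (hn : 1 ≤ n) (c : Fin n → Fin 3) (hl : n - 1 < n) :
    signExp n hn c = (patSet n c).card + (if c ⟨0, hn⟩ = 1 then 1 else 0)
      + (if c ⟨n - 1, hl⟩ = 0 then 1 else 0) := rfl

section CaseY

variable {n : ℕ} (hn : 1 ≤ n) {w : Fin n → Fin 2} {c : Fin n → Fin 3}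

lemma updY_mem (hw0 : w ⟨0, hn⟩ = 1) (hadm : IsAdmissible n c)
    (hcomp : ∀ i, w i ∈ S (c i)) :
    IsAdmissible n (Function.update c ⟨0, hn⟩ (t1 (c ⟨0, hn⟩)))
      ∧ ∀ i, w i ∈ S (Function.update c ⟨0, hn⟩ (t1 (c ⟨0, hn⟩)) i) := by
  set z0 : Fin n := ⟨0, hn⟩ with hz0
  have hc0 : c z0 = 1 ∨ c z0 = 2 := mem_S_one.mp (by have := hcomp z0; rwa [hw0] at this)
  set g := Function.update c z0 (t1 (c z0)) with hg
  have hgz0 : g z0 = t1 (c z0) := Function.update_self _ _ _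
  have hgne : ∀ p : Fin n, p ≠ z0 → g p = c p := fun p hp => Function.update_of_ne hp _ _
  constructor
  · intro i h
    have hsucc : (⟨i.val + 1, h⟩ : Fin n) ≠ z0 := by simp [hz0, Fin.ext_iff]
    rcases eq_or_ne i z0 with rfl | hi
    · rw [hgz0, hgne _ hsucc]
      constructor
      · intro h0; exact absurd h0 (t1_ne_zero hc0)
      · intro h1'
        exact absurd ((hadm z0 h).mpr h1') (by rcases hc0 with h' | h' <;> simp [h'])
    · rw [hgne _ hi, hgne _ hsucc]; exact hadm i h
  · intro i
    rcases eq_or_ne i z0 with rfl | hi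
    · rw [hgz0, hw0]; exact mem_S_one.mpr (t1_mem hc0)
    · rw [hgne _ hi]; exact hcomp i

lemma updY_parity (hw0 : w ⟨0, hn⟩ = 1) (hadm : IsAdmissible n c)
    (hcomp : ∀ i, w i ∈ S (c i)) :
    (signExp n hn c + signExp n hn (Function.update c ⟨0, hn⟩ (t1 (c ⟨0, hn⟩)))) % 2 = 1 := by
  set z0 : Fin n := ⟨0, hn⟩ with hz0
  have hc0 : c z0 = 1 ∨ c z0 = 2 := mem_S_one.mp (by have := hcomp z0; rwa [hw0] at this)
  set g := Function.update c z0 (t1 (c z0)) with hg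
  have hgz0 : g z0 = t1 (c z0) := Function.update_self _ _ _
  have hgne : ∀ p : Fin n, p ≠ z0 → g p = c p := fun p hp => Function.update_of_ne hp _ _
  have hl : n - 1 < n := by omega
  have hcard : (patSet n c).card = (patSet n g).card := by
    congr 1
    ext i
    rw [mem_patSet, mem_patSet]
    constructor
    · rintro ⟨h, h0, h1'⟩
      have hsucc : (⟨i.val + 1, h⟩ : Fin n) ≠ z0 := by simp [hz0, Fin.ext_iff]
      have hi : i ≠ z0 := by
        rintro rfl; rcases hc0 with h' | h' <;> simp [h'] at h0
      exact ⟨h, by rw [hgne _ hi]; exact h0, by rw [hgne _ hsucc]; exact h1'⟩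
    · rintro ⟨h, h0, h1'⟩
      have hsucc : (⟨i.val + 1, h⟩ : Fin n) ≠ z0 := by simp [hz0, Fin.ext_iff]
      have hi : i ≠ z0 := by
        rintro rfl; rw [hgz0] at h0; exact (t1_ne_zero hc0) h0
      exact ⟨h, by rw [← hgne _ hi]; exact h0, by rw [← hgne _ hsucc]; exact h1'⟩
  have hif1 : (if c z0 = 1 then 1 else 0) + (if g z0 = 1 then 1 else 0) = 1 := by
    rcases hc0 with h' | h' <;> rw [hgz0, h'] <;> simp [t1_one, t1_two, h']
  have hif2 : (if c ⟨n - 1, hl⟩ = 0 then 1 else 0) = (if g ⟨n - 1, hl⟩ = 0 then (1 : ℕ) else 0) := by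
    rcases eq_or_ne (⟨n - 1, hl⟩ : Fin n) z0 with h | h
    · rw [h, hgz0]
      rcases hc0 with h' | h' <;> rw [h'] <;> simp [t1_one, t1_two, h']
    · rw [hgne _ h]
  rw [signExp_eq n hn c hl, signExp_eq n hn g hl, ← hz0]
  omega

end CaseY

lemma keyY (n : ℕ) (hn : 1 ≤ n) (w : Fin n → Fin 2) (hw0 : w ⟨0, hn⟩ = 1) :
    ∑ c ∈ Finset.univ.filter
        (fun c : Fin n → Fin 3 => IsAdmissible n c ∧ ∀ i, w i ∈ S (c i)),
      (-1 : ℤ) ^ signExp n hn c = 0 := by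
  classical
  refine Finset.sum_involution
    (fun c _ => Function.update c ⟨0, hn⟩ (t1 (c ⟨0, hn⟩))) ?_ ?_ ?_ ?_
  · -- sign flip
    intro c hc
    rw [Finset.mem_filter] at hc
    obtain ⟨-, hadm, hcomp⟩ := hc
    show (-1 : ℤ) ^ signExp n hn c
        + (-1 : ℤ) ^ signExp n hn (Function.update c ⟨0, hn⟩ (t1 (c ⟨0, hn⟩))) = 0
    exact neg_one_pow_add (updY_parity hn hw0 hadm hcomp)
  · -- g ≠ id
    intro c hc _
    rw [Finset.mem_filter] at hc
    obtain ⟨-, hadm, hcomp⟩ := hc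
    have hc0 : c ⟨0, hn⟩ = 1 ∨ c ⟨0, hn⟩ = 2 :=
      mem_S_one.mp (by have := hcomp ⟨0, hn⟩; rwa [hw0] at this)
    intro h
    have h' : Function.update c ⟨0, hn⟩ (t1 (c ⟨0, hn⟩)) = c := h
    have := congrFun h' ⟨0, hn⟩
    rw [Function.update_self] at this
    exact t1_ne hc0 this
  · -- membership
    intro c hc
    rw [Finset.mem_filter] at hc
    obtain ⟨-, hadm, hcomp⟩ := hc
    show Function.update c ⟨0, hn⟩ (t1 (c ⟨0, hn⟩)) ∈ _
    rw [Finset.mem_filter]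
    exact ⟨Finset.mem_univ _, updY_mem hn hw0 hadm hcomp⟩
  · -- involutive
    intro c hc
    show Function.update (Function.update c ⟨0, hn⟩ (t1 (c ⟨0, hn⟩))) ⟨0, hn⟩
        (t1 (Function.update c ⟨0, hn⟩ (t1 (c ⟨0, hn⟩)) ⟨0, hn⟩)) = c
    rw [Function.update_self, Function.update_idem, t1_t1, Function.update_eq_self]

section CaseEnd

variable {n : ℕ} (hn : 1 ≤ n) {w : Fin n → Fin 2} {c : Fin n → Fin 3}

lemma updE_mem (hl : n - 1 < n) (hwl : w ⟨n - 1, hl⟩ = 0) (hadm : IsAdmissible n c)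
    (hcomp : ∀ i, w i ∈ S (c i)) :
    IsAdmissible n (Function.update c ⟨n - 1, hl⟩ (t0 (c ⟨n - 1, hl⟩)))
      ∧ ∀ i, w i ∈ S (Function.update c ⟨n - 1, hl⟩ (t0 (c ⟨n - 1, hl⟩)) i) := by
  set zl : Fin n := ⟨n - 1, hl⟩ with hzl
  have hcl : c zl = 0 ∨ c zl = 2 := mem_S_zero.mp (by have := hcomp zl; rwa [hwl] at this)
  set g := Function.update c zl (t0 (c zl)) with hg
  have hgzl : g zl = t0 (c zl) := Function.update_self _ _ _
  have hgne : ∀ p : Fin n, p ≠ zl → g p = c p := fun p hp => Function.update_of_ne hp _ _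
  constructor
  · intro i h
    have hi : i ≠ zl := by simp only [hzl, ne_eq, Fin.ext_iff]; omega
    rw [hgne _ hi]
    rcases eq_or_ne (⟨i.val + 1, h⟩ : Fin n) zl with he | he
    · rw [he, hgzl]
      constructor
      · intro h0
        have := (hadm i h).mp h0
        rw [he] at this
        exact absurd this (by rcases hcl with h' | h' <;> simp [h'])
      · intro h1'; exact absurd h1' (t0_ne_one hcl)
    · rw [hgne _ he]; exact hadm i h
  · intro i
    rcases eq_or_ne i zl with rfl | hi
    · rw [hgzl, hwl]; exact mem_S_zero.mpr (t0_mem hcl)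
    · rw [hgne _ hi]; exact hcomp i

lemma updE_parity (hl : n - 1 < n) (hwl : w ⟨n - 1, hl⟩ = 0) (hadm : IsAdmissible n c)
    (hcomp : ∀ i, w i ∈ S (c i)) :
    (signExp n hn c + signExp n hn (Function.update c ⟨n - 1, hl⟩ (t0 (c ⟨n - 1, hl⟩)))) % 2
      = 1 := by
  set zl : Fin n := ⟨n - 1, hl⟩ with hzl
  have hcl : c zl = 0 ∨ c zl = 2 := mem_S_zero.mp (by have := hcomp zl; rwa [hwl] at this)
  set g := Function.update c zl (t0 (c zl)) with hg
  have hgzl : g zl = t0 (c zl) := Function.update_self _ _ _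
  have hgne : ∀ p : Fin n, p ≠ zl → g p = c p := fun p hp => Function.update_of_ne hp _ _
  have hcard : (patSet n c).card = (patSet n g).card := by
    congr 1
    ext i
    rw [mem_patSet, mem_patSet]
    constructor
    · rintro ⟨h, h0, h1'⟩
      have hi : i ≠ zl := by simp only [hzl, ne_eq, Fin.ext_iff]; omega
      have he : (⟨i.val + 1, h⟩ : Fin n) ≠ zl := by
        rintro he; rw [he] at h1'
        rcases hcl with h' | h' <;> simp [h'] at h1'
      exact ⟨h, by rw [hgne _ hi]; exact h0, by rw [hgne _ he]; exact h1'⟩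
    · rintro ⟨h, h0, h1'⟩
      have hi : i ≠ zl := by simp only [hzl, ne_eq, Fin.ext_iff]; omega
      have he : (⟨i.val + 1, h⟩ : Fin n) ≠ zl := by
        rintro he; rw [he, hgzl] at h1'; exact (t0_ne_one hcl) h1'
      exact ⟨h, by rw [← hgne _ hi]; exact h0, by rw [← hgne _ he]; exact h1'⟩
  have hif2 : (if c zl = 0 then 1 else 0) + (if g zl = 0 then 1 else 0) = 1 := by
    rcases hcl with h' | h' <;> rw [hgzl, h'] <;> simp [t0_zero, t0_two, h']
  have hif1 : (if c ⟨0, hn⟩ = 1 then 1 else 0) = (if g ⟨0, hn⟩ = 1 then (1 : ℕ) else 0) := by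
    rcases eq_or_ne (⟨0, hn⟩ : Fin n) zl with h | h
    · rw [h, hgzl]
      rcases hcl with h' | h' <;> rw [h'] <;> simp [t0_zero, t0_two, h']
    · rw [hgne _ h]
  rw [signExp_eq n hn c hl, signExp_eq n hn g hl, ← hzl]
  omega

end CaseEnd

lemma keyEnd (n : ℕ) (hn : 1 ≤ n) (w : Fin n → Fin 2) (hl : n - 1 < n)
    (hwl : w ⟨n - 1, hl⟩ = 0) :
    ∑ c ∈ Finset.univ.filter
        (fun c : Fin n → Fin 3 => IsAdmissible n c ∧ ∀ i, w i ∈ S (c i)),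
      (-1 : ℤ) ^ signExp n hn c = 0 := by
  classical
  refine Finset.sum_involution
    (fun c _ => Function.update c ⟨n - 1, hl⟩ (t0 (c ⟨n - 1, hl⟩))) ?_ ?_ ?_ ?_
  · intro c hc
    rw [Finset.mem_filter] at hc
    obtain ⟨-, hadm, hcomp⟩ := hc
    show (-1 : ℤ) ^ signExp n hn c
        + (-1 : ℤ) ^ signExp n hn (Function.update c ⟨n - 1, hl⟩ (t0 (c ⟨n - 1, hl⟩))) = 0
    exact neg_one_pow_add (updE_parity hn hl hwl hadm hcomp)
  · intro c hc _
    rw [Finset.mem_filter] at hc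
    obtain ⟨-, hadm, hcomp⟩ := hc
    have hcl : c ⟨n - 1, hl⟩ = 0 ∨ c ⟨n - 1, hl⟩ = 2 :=
      mem_S_zero.mp (by have := hcomp ⟨n - 1, hl⟩; rwa [hwl] at this)
    intro h
    have h' : Function.update c ⟨n - 1, hl⟩ (t0 (c ⟨n - 1, hl⟩)) = c := h
    have := congrFun h' ⟨n - 1, hl⟩
    rw [Function.update_self] at this
    exact t0_ne hcl this
  · intro c hc
    rw [Finset.mem_filter] at hc
    obtain ⟨-, hadm, hcomp⟩ := hc
    show Function.update c ⟨n - 1, hl⟩ (t0 (c ⟨n - 1, hl⟩)) ∈ _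
    rw [Finset.mem_filter]
    exact ⟨Finset.mem_univ _, updE_mem hl hwl hadm hcomp⟩
  · intro c hc
    show Function.update (Function.update c ⟨n - 1, hl⟩ (t0 (c ⟨n - 1, hl⟩))) ⟨n - 1, hl⟩
        (t0 (Function.update c ⟨n - 1, hl⟩ (t0 (c ⟨n - 1, hl⟩)) ⟨n - 1, hl⟩)) = c
    rw [Function.update_self, Function.update_idem, t0_t0, Function.update_eq_self]

section CasePair

variable {n : ℕ} (hn : 1 ≤ n) {w : Fin n → Fin 2} {c : Fin n → Fin 3} {j : Fin n}

/-- the double update used in the pair case -/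
def updP (c : Fin n → Fin 3) (j j' : Fin n) : Fin n → Fin 3 :=
  Function.update (Function.update c j (t0 (c j))) j' (t1 (c j'))

variable (hj : j.val + 1 < n)

lemma updP_facts (hjj' : j ≠ (⟨j.val + 1, hj⟩ : Fin n)) :
    updP c j ⟨j.val + 1, hj⟩ j = t0 (c j)
      ∧ updP c j ⟨j.val + 1, hj⟩ ⟨j.val + 1, hj⟩ = t1 (c ⟨j.val + 1, hj⟩)
      ∧ ∀ p : Fin n, p ≠ j → p ≠ ⟨j.val + 1, hj⟩ → updP c j ⟨j.val + 1, hj⟩ p = c p := by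
  refine ⟨?_, ?_, ?_⟩
  · rw [updP, Function.update_of_ne hjj', Function.update_self]
  · rw [updP, Function.update_self]
  · intro p hp1 hp2
    rw [updP, Function.update_of_ne hp2, Function.update_of_ne hp1]

lemma pair_state (hwj : w j = 0) (hwj1 : w ⟨j.val + 1, hj⟩ = 1) (hadm : IsAdmissible n c)
    (hcomp : ∀ i, w i ∈ S (c i)) :
    (c j = 0 ∧ c ⟨j.val + 1, hj⟩ = 1) ∨ (c j = 2 ∧ c ⟨j.val + 1, hj⟩ = 2) := by
  have hcj : c j = 0 ∨ c j = 2 := mem_S_zero.mp (by have := hcomp j; rwa [hwj] at this)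
  have hcj' : c ⟨j.val + 1, hj⟩ = 1 ∨ c ⟨j.val + 1, hj⟩ = 2 :=
    mem_S_one.mp (by have := hcomp ⟨j.val + 1, hj⟩; rwa [hwj1] at this)
  rcases hcj with h0 | h0
  · exact Or.inl ⟨h0, (hadm j hj).mp h0⟩
  · rcases hcj' with h1 | h1
    · exact absurd ((hadm j hj).mpr h1) (by simp [h0])
    · exact Or.inr ⟨h0, h1⟩

lemma updP_mem (hwj : w j = 0) (hwj1 : w ⟨j.val + 1, hj⟩ = 1) (hadm : IsAdmissible n c)
    (hcomp : ∀ i, w i ∈ S (c i)) :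
    IsAdmissible n (updP c j ⟨j.val + 1, hj⟩)
      ∧ ∀ i, w i ∈ S (updP c j ⟨j.val + 1, hj⟩ i) := by
  have hjj' : j ≠ (⟨j.val + 1, hj⟩ : Fin n) := by simp only [ne_eq, Fin.ext_iff]; omega
  obtain ⟨hgj, hgj', hgne⟩ := updP_facts hj hjj'
  have hpair := pair_state hj hwj hwj1 hadm hcomp
  set j' : Fin n := ⟨j.val + 1, hj⟩ with hj'
  set g := updP c j j' with hg
  have hcj : c j = 0 ∨ c j = 2 := by rcases hpair with ⟨h, -⟩ | ⟨h, -⟩ <;> simp [h]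
  have hcj' : c j' = 1 ∨ c j' = 2 := by rcases hpair with ⟨-, h⟩ | ⟨-, h⟩ <;> simp [h]
  constructor
  · intro i h
    rcases eq_or_ne i j with rfl | hij
    · have : (⟨i.val + 1, h⟩ : Fin n) = j' := rfl
      rw [this, hgj, hgj']
      rcases hpair with ⟨h0, h1⟩ | ⟨h0, h1⟩ <;> rw [h0, h1] <;> simp [t0_zero, t0_two, t1_one, t1_two]
    · rcases eq_or_ne (⟨i.val + 1, h⟩ : Fin n) j with he | he
      · -- i is just before j
        have hij' : i ≠ j' := by
          simp only [hj', ne_eq, Fin.ext_iff] at he ⊢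
          omega
        rw [hgne i hij hij', he, hgj]
        constructor
        · intro h0
          have := (hadm i h).mp h0
          rw [he] at this
          exact absurd this (by rcases hcj with h' | h' <;> simp [h'])
        · intro h1'; exact absurd h1' (t0_ne_one hcj)
      · rcases eq_or_ne i j' with rfl | hij'
        · have hs : (⟨j'.val + 1, h⟩ : Fin n) ≠ j' := by
            simp only [hj', ne_eq, Fin.ext_iff]; omega
          rw [hgj', hgne _ he hs]
          constructor
          · intro h0; exact absurd h0 (t1_ne_zero hcj')
          · intro h1'
            have := (hadm j' h).mpr h1'
            exact absurd this (by rcases hcj' with h' | h' <;> simp [h'])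
        · have hs : (⟨i.val + 1, h⟩ : Fin n) ≠ j' := by
            simp only [hj', ne_eq, Fin.ext_iff] at hij ⊢
            omega
          rw [hgne _ hij hij', hgne _ he hs]
          exact hadm i h
  · intro i
    rcases eq_or_ne i j with rfl | hij
    · rw [hgj, hwj]; exact mem_S_zero.mpr (t0_mem hcj)
    · rcases eq_or_ne i j' with rfl | hij'
      · rw [hgj', hwj1]; exact mem_S_one.mpr (t1_mem hcj')
      · rw [hgne _ hij hij']; exact hcomp i

lemma updP_parity (hwj : w j = 0) (hwj1 : w ⟨j.val + 1, hj⟩ = 1) (hadm : IsAdmissible n c)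
    (hcomp : ∀ i, w i ∈ S (c i)) :
    (signExp n hn c + signExp n hn (updP c j ⟨j.val + 1, hj⟩)) % 2 = 1 := by
  have hjj' : j ≠ (⟨j.val + 1, hj⟩ : Fin n) := by simp only [ne_eq, Fin.ext_iff]; omega
  obtain ⟨hgj, hgj', hgne⟩ := updP_facts hj hjj'
  have hpair := pair_state hj hwj hwj1 hadm hcomp
  set j' : Fin n := ⟨j.val + 1, hj⟩ with hj'
  set g := updP c j j' with hg
  have hcj : c j = 0 ∨ c j = 2 := by rcases hpair with ⟨h, -⟩ | ⟨h, -⟩ <;> simp [h]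
  have hcj' : c j' = 1 ∨ c j' = 2 := by rcases hpair with ⟨-, h⟩ | ⟨-, h⟩ <;> simp [h]
  have hl : n - 1 < n := by omega
  have hcard : ((patSet n c).card + (patSet n g).card) % 2 = 1 := by
    apply card_helper (j := j)
    · intro i hij
      rw [mem_patSet, mem_patSet]
      constructor
      · rintro ⟨h, h0, h1'⟩
        rcases eq_or_ne (⟨i.val + 1, h⟩ : Fin n) j with he | he
        · rw [he] at h1'
          exact absurd h1' (by rcases hcj with h' | h' <;> simp [h'])
        · rcases eq_or_ne i j' with rfl | hij'
          · exact absurd h0 (by rcases hcj' with h' | h' <;> simp [h'])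
          · have hs : (⟨i.val + 1, h⟩ : Fin n) ≠ j' := by
              simp only [hj', ne_eq, Fin.ext_iff] at hij ⊢
              omega
            exact ⟨h, by rw [hgne _ hij hij']; exact h0, by rw [hgne _ he hs]; exact h1'⟩
      · rintro ⟨h, h0, h1'⟩
        rcases eq_or_ne (⟨i.val + 1, h⟩ : Fin n) j with he | he
        · rw [he, hgj] at h1'
          exact absurd h1' (t0_ne_one hcj)
        · rcases eq_or_ne i j' with rfl | hij'
          · rw [hgj'] at h0
            exact absurd h0 (t1_ne_zero hcj')
          · have hs : (⟨i.val + 1, h⟩ : Fin n) ≠ j' := by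
              simp only [hj', ne_eq, Fin.ext_iff] at hij ⊢
              omega
            exact ⟨h, by rw [← hgne _ hij hij']; exact h0, by rw [← hgne _ he hs]; exact h1'⟩
    · rw [mem_patSet, mem_patSet]
      rcases hpair with ⟨h0, h1⟩ | ⟨h0, h1⟩
      · constructor
        · rintro - ⟨h, hg0, -⟩
          rw [hgj, h0, t0_zero] at hg0
          exact absurd hg0 (by decide)
        · intro _; exact ⟨hj, h0, h1⟩
      · constructor
        · rintro ⟨h, hc0, -⟩
          rw [h0] at hc0
          exact absurd hc0 (by decide)
        · intro hng
          exact absurd ⟨hj, by rw [hgj, h0, t0_two], by rw [hgj', h1, t1_two]⟩ hng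
  have hif1 : (if c ⟨0, hn⟩ = 1 then 1 else 0) = (if g ⟨0, hn⟩ = 1 then (1 : ℕ) else 0) := by
    rcases eq_or_ne (⟨0, hn⟩ : Fin n) j with h | h
    · rw [h, hgj]
      rcases hcj with h' | h' <;> rw [h'] <;> simp [t0_zero, t0_two]
    · have h2 : (⟨0, hn⟩ : Fin n) ≠ j' := by simp only [hj', ne_eq, Fin.ext_iff]; omega
      rw [hgne _ h h2]
  have hif2 : (if c ⟨n - 1, hl⟩ = 0 then 1 else 0)
      = (if g ⟨n - 1, hl⟩ = 0 then (1 : ℕ) else 0) := by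
    have h1 : (⟨n - 1, hl⟩ : Fin n) ≠ j := by simp only [ne_eq, Fin.ext_iff]; omega
    rcases eq_or_ne (⟨n - 1, hl⟩ : Fin n) j' with h | h
    · rw [h, hgj']
      rcases hcj' with h' | h' <;> rw [h'] <;> simp [t1_one, t1_two]
    · rw [hgne _ h1 h]
  rw [signExp_eq n hn c hl, signExp_eq n hn g hl]
  omega

end CasePair

lemma keyPair (n : ℕ) (hn : 1 ≤ n) (w : Fin n → Fin 2) (j : Fin n) (hj : j.val + 1 < n)
    (hwj : w j = 0) (hwj1 : w ⟨j.val + 1, hj⟩ = 1) :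
    ∑ c ∈ Finset.univ.filter
        (fun c : Fin n → Fin 3 => IsAdmissible n c ∧ ∀ i, w i ∈ S (c i)),
      (-1 : ℤ) ^ signExp n hn c = 0 := by
  classical
  have hjj' : j ≠ (⟨j.val + 1, hj⟩ : Fin n) := by simp only [ne_eq, Fin.ext_iff]; omega
  refine Finset.sum_involution (fun c _ => updP c j ⟨j.val + 1, hj⟩) ?_ ?_ ?_ ?_
  · intro c hc
    rw [Finset.mem_filter] at hc
    obtain ⟨-, hadm, hcomp⟩ := hc
    show (-1 : ℤ) ^ signExp n hn c + (-1 : ℤ) ^ signExp n hn (updP c j ⟨j.val + 1, hj⟩) = 0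
    exact neg_one_pow_add (updP_parity hn hj hwj hwj1 hadm hcomp)
  · intro c hc _
    rw [Finset.mem_filter] at hc
    obtain ⟨-, hadm, hcomp⟩ := hc
    obtain ⟨hgj, -, -⟩ := updP_facts (c := c) hj hjj'
    have hcj : c j = 0 ∨ c j = 2 := mem_S_zero.mp (by have := hcomp j; rwa [hwj] at this)
    intro h
    have h' : updP c j ⟨j.val + 1, hj⟩ = c := h
    have := congrFun h' j
    rw [hgj] at this
    exact t0_ne hcj this
  · intro c hc
    rw [Finset.mem_filter] at hc
    obtain ⟨-, hadm, hcomp⟩ := hc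
    show updP c j ⟨j.val + 1, hj⟩ ∈ _
    rw [Finset.mem_filter]
    exact ⟨Finset.mem_univ _, updP_mem hj hwj hwj1 hadm hcomp⟩
  · intro c hc
    show updP (updP c j ⟨j.val + 1, hj⟩) j ⟨j.val + 1, hj⟩ = c
    obtain ⟨hgj, hgj', hgne⟩ := updP_facts (c := c) hj hjj'
    set j' : Fin n := ⟨j.val + 1, hj⟩ with hj'
    set g := updP c j j' with hg
    funext p
    rcases eq_or_ne p j' with rfl | hp1
    · rw [updP, Function.update_self, hgj', t1_t1]
    · rw [updP, Function.update_of_ne hp1]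
      rcases eq_or_ne p j with rfl | hp2
      · rw [Function.update_self, hgj, t0_t0]
      · rw [Function.update_of_ne hp2]
        exact hgne p hp2 hp1

lemma key (n : ℕ) (hn : 1 ≤ n) (w : Fin n → Fin 2) :
    ∑ c ∈ Finset.univ.filter
        (fun c : Fin n → Fin 3 => IsAdmissible n c ∧ ∀ i, w i ∈ S (c i)),
      (-1 : ℤ) ^ signExp n hn c = 0 := by
  classical
  by_cases hw0 : w ⟨0, hn⟩ = 1
  · exact keyY n hn w hw0
  · have hl : n - 1 < n := by omega
    have hw0' : w ⟨0, hn⟩ = 0 := by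
      have h : ∀ a : Fin 2, a ≠ 1 → a = 0 := by decide
      exact h _ hw0
    by_cases hwl : w ⟨n - 1, hl⟩ = 0
    · exact keyEnd n hn w hl hwl
    · have hwl' : w ⟨n - 1, hl⟩ = 1 := by
        have h : ∀ a : Fin 2, a ≠ 0 → a = 1 := by decide
        exact h _ hwl
      have hne : (Finset.univ.filter (fun i : Fin n => w i = 0)).Nonempty :=
        ⟨⟨0, hn⟩, by simp [hw0']⟩
      obtain ⟨j, hjmem, hjmax⟩ :
          ∃ j ∈ Finset.univ.filter (fun i : Fin n => w i = 0),
            ∀ i ∈ Finset.univ.filter (fun i : Fin n => w i = 0), i ≤ j :=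
        ⟨_, Finset.max'_mem _ hne, fun i hi => Finset.le_max' _ i hi⟩
      have hwj : w j = 0 := (Finset.mem_filter.mp hjmem).2
      have hjl : j.val + 1 < n := by
        rcases Nat.lt_or_ge (j.val + 1) n with h | h
        · exact h
        · exfalso
          have hj2 : j.val = n - 1 := by have := j.isLt; omega
          have hje : j = ⟨n - 1, hl⟩ := Fin.ext hj2
          rw [hje, hwl'] at hwj
          exact absurd hwj (by decide)
      have hwj1 : w ⟨j.val + 1, hjl⟩ = 1 := by
        by_contra h
        have h0 : w ⟨j.val + 1, hjl⟩ = 0 := by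
          have h' : ∀ a : Fin 2, a ≠ 1 → a = 0 := by decide
          exact h' _ h
        have hmem : (⟨j.val + 1, hjl⟩ : Fin n) ∈
            Finset.univ.filter (fun i : Fin n => w i = 0) := by simp [h0]
        have hle := hjmax _ hmem
        rw [Fin.le_def] at hle
        simp only [Fin.val_mk] at hle
        omega
      exact keyPair n hn w j hjl hwj hwj1


lemma entry_eq {A : Type*} [AddCommGroup A] (x y : A) (k : Fin 3) :
    entryVal x y k = ∑ j ∈ S k, ![x, y] j := by
  fin_cases k <;>
    simp [entryVal, S, Finset.sum_pair, (by decide : (0 : Fin 2) ≠ 1)]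

end Stmt13Aux


open Stmt13Aux in
/-- The signed sum `Σ (-1)^d μ(a₁,…,aₙ)` over all admissible tuples with entries in
`{x, y, x+y}` vanishes, for any map `μ` additive in each of its `n` arguments. -/
theorem stmt_13 {A A' : Type*} [AddCommGroup A] [AddCommGroup A'] (n : ℕ) (hn : 1 ≤ n)
    (μ : MultilinearMap ℤ (fun _ : Fin n => A) A') (x y : A) :
    ∑ c ∈ Finset.univ.filter (IsAdmissible n),
      ((-1 : ℤ) ^ signExp n hn c) • μ (fun i => entryVal x y (c i)) = 0 := by
  classical
  have expand : ∀ c : Fin n → Fin 3,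
      (μ fun i => entryVal x y (c i)) =
        ∑ r ∈ Fintype.piFinset (fun i => S (c i)), μ (fun i => ![x, y] (r i)) := by
    intro c
    have h : ∀ i, entryVal x y (c i) = ∑ j ∈ S (c i), ![x, y] j := fun i => entry_eq x y (c i)
    calc (μ fun i => entryVal x y (c i)) = μ fun i => ∑ j ∈ S (c i), ![x, y] j := by
          exact congrArg μ (funext h)
      _ = _ := MultilinearMap.map_sum_finset μ (fun _ j => ![x, y] j) (fun i => S (c i))
  have step1 : ∑ c ∈ Finset.univ.filter (IsAdmissible n),
        ((-1 : ℤ) ^ signExp n hn c) • μ (fun i => entryVal x y (c i))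
      = ∑ c : Fin n → Fin 3, ∑ r : Fin n → Fin 2,
          if IsAdmissible n c ∧ ∀ i, r i ∈ S (c i) then
            ((-1 : ℤ) ^ signExp n hn c) • μ (fun i => ![x, y] (r i)) else 0 := by
    rw [Finset.sum_filter]
    refine Finset.sum_congr rfl fun c _ => ?_
    by_cases hc : IsAdmissible n c
    · simp only [hc, if_true, true_and, expand c, Finset.smul_sum]
      have hpi : Fintype.piFinset (fun i => S (c i))
          = Finset.univ.filter (fun r : Fin n → Fin 2 => ∀ i, r i ∈ S (c i)) := by
        ext r; simp [Fintype.mem_piFinset]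
      rw [hpi, Finset.sum_filter]
    · simp [hc]
  rw [step1, Finset.sum_comm]
  have step2 : ∀ r : Fin n → Fin 2,
      (∑ c : Fin n → Fin 3,
          if IsAdmissible n c ∧ ∀ i, r i ∈ S (c i) then
            ((-1 : ℤ) ^ signExp n hn c) • μ (fun i => ![x, y] (r i)) else 0) = 0 := by
    intro r
    have : ∀ c : Fin n → Fin 3,
        (if IsAdmissible n c ∧ ∀ i, r i ∈ S (c i) then
            ((-1 : ℤ) ^ signExp n hn c) • μ (fun i => ![x, y] (r i)) else 0)
        = (if IsAdmissible n c ∧ ∀ i, r i ∈ S (c i) then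
            ((-1 : ℤ) ^ signExp n hn c) else 0) • μ (fun i => ![x, y] (r i)) := by
      intro c; by_cases h : IsAdmissible n c ∧ ∀ i, r i ∈ S (c i) <;> simp [h]
    simp only [this, ← Finset.sum_smul]
    rw [← Finset.sum_filter, key n hn r, zero_smul]
  exact Finset.sum_eq_zero fun r _ => step2 r
end

section
/- Let K be a commutative ring, R a K-algebra, p ∈ R, and R' = R⟨q | pqp = p⟩ (the K-algebra obtained from R by freely adjoining an element q subject to pqp = p). Then R' admits a K-algebra endomorphism φ fixing the image of R and sending q to qpq, and φ is idempotent (φ ∘ φ = φ). -/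
universe u v w

/-- Let `R'` be the `K`-algebra `R⟨q ∣ pqp = p⟩`, presented by its universal property:
it comes with a canonical map `ι : R → R'` and an element `q` satisfying `ιp * q * ιp = ιp`,
universal among such data.  Then `R'` admits an idempotent `K`-algebra endomorphism `φ`
fixing the image of `R` and sending `q` to `q * ιp * q`. -/
theorem stmt_18 {K : Type u} [CommRing K] {R : Type v} [Ring R] [Algebra K R]
    {R' : Type w} [Ring R'] [Algebra K R'] (p : R) (ι : R →ₐ[K] R') (q : R')
    (hrel : ι p * q * ι p = ι p)
    (huniv : ∀ (S : Type w) [Ring S] [Algebra K S] (f : R →ₐ[K] S) (q' : S),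
      f p * q' * f p = f p →
        ∃! g : R' →ₐ[K] S, (∀ r : R, g (ι r) = f r) ∧ g q = q') :
    ∃ φ : R' →ₐ[K] R',
      (∀ r : R, φ (ι r) = ι r) ∧ φ q = q * ι p * q ∧ φ.comp φ = φ := by
  have hcond : ι p * (q * ι p * q) * ι p = ι p := by
    have h : ι p * (q * ι p * q) * ι p = (ι p * q * ι p) * (q * ι p) := by noncomm_ring
    rw [h, hrel, ← mul_assoc, hrel]
  obtain ⟨g, ⟨hg1, hg2⟩, hu⟩ := huniv R' ι (q * ι p * q) hcond
  refine ⟨g, hg1, hg2, ?_⟩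
  apply hu
  constructor
  · intro r
    simp [hg1]
  · show g (g q) = q * ι p * q
    rw [hg2, map_mul, map_mul, hg1, hg2]
    have h1 : q * ι p * q * ι p * (q * ι p * q)
        = q * (ι p * q * ι p) * (q * ι p * q) := by noncomm_ring
    rw [h1, hrel]
    have h2 : q * ι p * (q * ι p * q) = q * (ι p * q * ι p) * q := by noncomm_ring
    rw [h2, hrel]
end
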